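/- Define E_{ij} = (1/2)·[L_{θ_i}, Δ_j] ∈ End_K(Λ_n(p)) for i, j = 1, …, n, where [A, B] = A∘B − B∘A. Then [E_{ij}, E_{kl}] = δ_{jk}·E_{il} − δ_{il}·E_{kj} for all i, j, k, l ∈ {1,…,n}; that is, the E_{ij} satisfy the standard commutation relations of gl_n(K). -/

import Mathlib

noncomputable section

open scoped BigOperators

/-- Commutator `[x, y] = x*y - y*x` in an associative ring. -/
def brk {A : Type*} [Ring A] (x y : A) : A := x * y - y * x

/-- Defining relations of the `ℤ₂^p`-graded commutative algebra `Λ_n(p)`: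
`θ_i^{(α)}·θ_j^{(β)} = (−1)^{δ_{αβ}}·θ_j^{(β)}·θ_i^{(α)}`. -/
inductive LamRel (n p : ℕ) : FreeAlgebra ℂ (Fin n × Fin p) → FreeAlgebra ℂ (Fin n × Fin p) → Prop
  | comm : ∀ (i j : Fin n) (α β : Fin p),
      LamRel n p (FreeAlgebra.ι ℂ (i, α) * FreeAlgebra.ι ℂ (j, β))
        ((if α = β then (-1 : ℂ) else 1) • (FreeAlgebra.ι ℂ (j, β) * FreeAlgebra.ι ℂ (i, α)))

/-- The algebra `Λ_n(p)`. -/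
abbrev Lam (n p : ℕ) : Type := RingQuot (LamRel n p)

/-- The generators `θ_i^{(α)}` of `Λ_n(p)`. -/
def θc (n p : ℕ) (i : Fin n) (α : Fin p) : Lam n p :=
  RingQuot.mkAlgHom ℂ (LamRel n p) (FreeAlgebra.ι ℂ (i, α))

/-- `θ_i = Σ_{α=1}^p θ_i^{(α)}`. -/
def θv (n p : ℕ) (i : Fin n) : Lam n p := ∑ α : Fin p, θc n p i α

/-- The inhomogeneous subalgebra `IΛ_n(p)` generated by `θ_1, …, θ_n`. -/
def ILam (n p : ℕ) : Subalgebra ℂ (Lam n p) :=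
  Algebra.adjoin ℂ (Set.range (θv n p))

/-- `Δ_i = Σ_{α=1}^p ∂_i^{(α)}`. -/
def Δop (n p : ℕ) (Dp : Fin n → Fin p → Module.End ℂ (Lam n p)) (i : Fin n) :
    Module.End ℂ (Lam n p) := ∑ α : Fin p, Dp i α

/- ### Auxiliary material -/

/-- Left multiplication by `θ_i^{(α)}` as an endomorphism. -/
def LcE (n p : ℕ) (i : Fin n) (α : Fin p) : Module.End ℂ (Lam n p) :=
  LinearMap.mulLeft ℂ (θc n p i α)

lemma theta_comm (n p : ℕ) (i j : Fin n) (α β : Fin p) :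
    θc n p i α * θc n p j β = (if α = β then (-1:ℂ) else 1) • (θc n p j β * θc n p i α) := by
  have h := RingQuot.mkAlgHom_rel ℂ (LamRel.comm (n := n) (p := p) i j α β)
  rw [map_mul, map_smul, map_mul] at h
  simpa [θc] using h

lemma mulLeft_sum (n p : ℕ) (f : Fin p → Lam n p) :
    LinearMap.mulLeft ℂ (∑ α : Fin p, f α) = ∑ α : Fin p, LinearMap.mulLeft ℂ (f α) := by
  ext y; simp [Finset.sum_mul]

lemma Lc_comm (n p : ℕ) (i j : Fin n) (α β : Fin p) :
    LcE n p i α * LcE n p j β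
      = (if α = β then (-1:ℂ) else 1) • (LcE n p j β * LcE n p i α) := by
  unfold LcE
  ext y
  simp only [Module.End.mul_apply, LinearMap.mulLeft_apply, LinearMap.smul_apply]
  rw [← mul_assoc, ← mul_assoc, theta_comm, smul_mul_assoc]

lemma keycalc {A : Type*} [Ring A] [Algebra ℂ A] (a b d e : A) (ε c1 c2 : ℂ)
    (hε : ε * ε = 1) (hdb : d * b = ε • (b * d) + c1 • (1:A))
    (hea : e * a = ε • (a * e) + c2 • (1:A))
    (hab : a * b = ε • (b * a)) (hde : d * e = ε • (e * d)) :
    brk (a*d) (b*e) = c1 • (a*e) - c2 • (b*d) := by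
  have hae : a * e = ε • (e * a) - (ε * c2) • (1:A) := by
    rw [hea, smul_add, smul_smul, smul_smul, hε, one_smul]
    abel
  unfold brk
  calc (a*d)*(b*e) - (b*e)*(a*d)
      = a*(d*b)*e - (b*e)*(a*d) := by noncomm_ring
    _ = ε • (a*b*(d*e)) + c1 • (a*e) - (b*e)*(a*d) := by
        rw [hdb]; simp only [mul_add, add_mul, mul_smul_comm, smul_mul_assoc, mul_one, mul_assoc]
    _ = (ε*ε) • ((a*b)*(e*d)) + c1 • (a*e) - (b*e)*(a*d) := by
        rw [hde]; simp only [mul_smul_comm, smul_smul, mul_assoc]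
    _ = ε • (b*(a*e)*d) + c1 • (a*e) - (b*e)*(a*d) := by
        rw [hε, one_smul, hab]; simp only [smul_mul_assoc, mul_assoc]
    _ = (ε*ε) • ((b*e)*(a*d)) - (ε*ε*c2) • (b*d) + c1 • (a*e) - (b*e)*(a*d) := by
        rw [hae]
        simp only [mul_sub, sub_mul, smul_sub, mul_smul_comm, smul_mul_assoc, smul_smul,
          mul_one, mul_assoc]
    _ = c1 • (a*e) - c2 • (b*d) := by rw [hε, one_smul, one_mul]; abel

lemma brk_sum_sum {A : Type*} [Ring A] {p : ℕ} (f g : Fin p → A) :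
    brk (∑ α : Fin p, f α) (∑ β : Fin p, g β)
      = ∑ α : Fin p, ∑ β : Fin p, brk (f α) (g β) := by
  unfold brk
  rw [Finset.sum_mul_sum, Finset.sum_mul_sum, Finset.sum_comm (f := fun β α => g β * f α)]
  rw [← Finset.sum_sub_distrib]
  exact Finset.sum_congr rfl fun α _ => (Finset.sum_sub_distrib _ _).symm

lemma brk_sub_smul_one {A : Type*} [Ring A] [Algebra ℂ A] (x y : A) (c c' : ℂ) :
    brk (x - c • 1) (y - c' • 1) = brk x y := by
  unfold brk
  simp only [sub_mul, mul_sub, smul_mul_assoc, mul_smul_comm, smul_smul, smul_sub, mul_one,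
    one_mul, mul_comm c c']
  abel

/-- The operators `E_{ij} = (1/2)·[L_{θ_i}, Δ_j]` satisfy the standard
`gl_n` commutation relations `[E_{ij}, E_{kl}] = δ_{jk}·E_{il} − δ_{il}·E_{kj}`. -/
theorem stmt_14 (n p : ℕ) (hn : 0 < n) (hp : 0 < p)
    (Dp : Fin n → Fin p → Module.End ℂ (Lam n p))
    (hD1 : ∀ (i : Fin n) (α : Fin p), Dp i α (1 : Lam n p) = 0)
    (hD2 : ∀ (i j : Fin n) (α β : Fin p),
      Dp i α * LinearMap.mulLeft ℂ (θc n p j β)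
          - (if α = β then (-1 : ℂ) else 1) • (LinearMap.mulLeft ℂ (θc n p j β) * Dp i α)
        = if i = j ∧ α = β then 1 else 0)
    (hD3 : ∀ (i j : Fin n) (α β : Fin p),
      Dp i α * Dp j β = (if α = β then (-1 : ℂ) else 1) • (Dp j β * Dp i α))
    (E : Fin n → Fin n → Module.End ℂ (Lam n p))
    (hE : ∀ i j, E i j
      = (1 / 2 : ℂ) • brk (LinearMap.mulLeft ℂ (θv n p i)) (Δop n p Dp j)) :
    ∀ i j k l : Fin n,
      brk (E i j) (E k l)
        = (if j = k then (1 : ℂ) else 0) • E i l - (if i = l then (1 : ℂ) else 0) • E k j := by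
  -- rearranged form of hD2
  have hD2' : ∀ (i j : Fin n) (α β : Fin p),
      Dp i α * LcE n p j β = (if α = β then (-1:ℂ) else 1) • (LcE n p j β * Dp i α)
        + (if i = j ∧ α = β then (1:ℂ) else 0) • 1 := by
    intro i j α β
    have h := hD2 i j α β
    rw [sub_eq_iff_eq_add (G := Module.End ℂ (Lam n p))] at h
    have hone : (if i = j ∧ α = β then (1 : Module.End ℂ (Lam n p)) else 0)
        = (if i = j ∧ α = β then (1:ℂ) else 0) • 1 := by
      by_cases hc : i = j ∧ α = β <;> simp [hc]
    unfold LcE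
    rw [h, hone, add_comm]
  -- E in terms of F i j := ∑ α, LcE i α * Dp j α
  have hEF : ∀ a b : Fin n, E a b
      = (∑ α : Fin p, LcE n p a α * Dp b α)
        - ((p:ℂ)/2 * (if a = b then 1 else 0)) • 1 := by
    intro a b
    rw [hE a b]
    have h1 : LinearMap.mulLeft ℂ (θv n p a) = ∑ β : Fin p, LcE n p a β := by
      unfold θv LcE; exact mulLeft_sum n p _
    rw [h1, show Δop n p Dp b = ∑ α : Fin p, Dp b α from rfl, brk_sum_sum]
    have hterm : ∀ β α : Fin p, brk (LcE n p a β) (Dp b α)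
        = (if α = β then (2:ℂ) else 0) • (LcE n p a β * Dp b α)
          - (if b = a ∧ α = β then (1:ℂ) else 0) • 1 := by
      intro β α
      rw [brk, hD2' b a α β]
      by_cases hc : α = β
      · subst hc
        simp only [if_pos rfl, and_true, if_true]
        rw [two_smul, neg_smul (M := Module.End ℂ (Lam n p)), one_smul]
        abel
      · simp [hc]; exact (sub_zero (0 : Module.End ℂ (Lam n p))).symm
    have hA : ∑ β : Fin p, ∑ α : Fin p,
        (if α = β then (2:ℂ) else 0) • (LcE n p a β * Dp b α)
        = (2:ℂ) • ∑ α : Fin p, LcE n p a α * Dp b α := by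
      rw [Finset.smul_sum]
      refine Finset.sum_congr rfl fun β _ => ?_
      rw [Finset.sum_eq_single β]
      · rw [if_pos rfl]
      · intro α _ hne; rw [if_neg hne, zero_smul]
      · intro h; exact absurd (Finset.mem_univ β) h
    have hB : ∑ β : Fin p, ∑ α : Fin p,
        (if b = a ∧ α = β then (1:ℂ) else 0) • (1 : Module.End ℂ (Lam n p))
        = ((p:ℂ) * (if a = b then 1 else 0)) • 1 := by
      by_cases hba : b = a
      · subst hba
        simp only [if_pos rfl, true_and, mul_one]
        have hin : ∀ β : Fin p, ∑ α : Fin p,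
            (if α = β then (1:ℂ) else 0) • (1 : Module.End ℂ (Lam n p)) = 1 := by
          intro β
          rw [Finset.sum_eq_single β]
          · rw [if_pos rfl, one_smul]
          · intro α _ hne; rw [if_neg hne, zero_smul]
          · intro h; exact absurd (Finset.mem_univ β) h
        simp only [hin, Finset.sum_const, Finset.card_univ, Fintype.card_fin]
        simp [← Nat.cast_smul_eq_nsmul ℂ]
      · have hab' : ¬ a = b := fun h => hba h.symm
        simp [hba, hab']
    simp only [hterm, Finset.sum_sub_distrib (G := Module.End ℂ (Lam n p))]
    rw [hA, hB, smul_sub, smul_smul, smul_smul]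
    have e1 : (1/2:ℂ) * 2 = 1 := by norm_num
    have e2 : (1/2:ℂ) * ((p:ℂ) * (if a = b then 1 else 0))
        = (p:ℂ)/2 * (if a = b then 1 else 0) := by ring
    rw [e1, e2, one_smul]
  -- gl_n relations for F
  have hFF : ∀ i j k l : Fin n,
      brk (∑ α : Fin p, LcE n p i α * Dp j α) (∑ β : Fin p, LcE n p k β * Dp l β)
        = (if j = k then (1:ℂ) else 0) • (∑ α : Fin p, LcE n p i α * Dp l α)
          - (if i = l then (1:ℂ) else 0) • (∑ α : Fin p, LcE n p k α * Dp j α) := by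
    intro i j k l
    rw [brk_sum_sum]
    have hterm2 : ∀ α β : Fin p,
        brk (LcE n p i α * Dp j α) (LcE n p k β * Dp l β)
          = (if j = k ∧ α = β then (1:ℂ) else 0) • (LcE n p i α * Dp l β)
            - (if i = l ∧ α = β then (1:ℂ) else 0) • (LcE n p k β * Dp j α) := by
      intro α β
      refine keycalc _ _ _ _ (if α = β then (-1:ℂ) else 1) _ _ ?_ ?_ ?_ ?_ ?_
      · by_cases h : α = β <;> simp [h]
      · exact hD2' j k α β
      · have h := hD2' l i β α
        have e1 : (if β = α then (-1:ℂ) else 1) = (if α = β then (-1:ℂ) else 1) := by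
          by_cases hh : α = β
          · simp [hh]
          · rw [if_neg hh, if_neg (fun hhh => hh hhh.symm)]
        have e2 : (if l = i ∧ β = α then (1:ℂ) else 0)
            = (if i = l ∧ α = β then (1:ℂ) else 0) := by
          have : (l = i ∧ β = α) ↔ (i = l ∧ α = β) := by
            constructor
            · rintro ⟨h1, h2⟩; exact ⟨h1.symm, h2.symm⟩
            · rintro ⟨h1, h2⟩; exact ⟨h1.symm, h2.symm⟩
          rw [if_congr this rfl rfl]
        rw [e1, e2] at h
        exact h
      · exact Lc_comm n p i k α β
      · exact hD3 j l α β
    simp only [hterm2, Finset.sum_sub_distrib (G := Module.End ℂ (Lam n p))]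
    congr 1
    · rw [Finset.smul_sum]
      refine Finset.sum_congr rfl fun α _ => ?_
      rw [Finset.sum_eq_single α]
      · by_cases h : j = k <;> simp [h]
      · intro β _ hne
        rw [if_neg (fun hc => hne hc.2.symm), zero_smul]
      · intro h; exact absurd (Finset.mem_univ α) h
    · rw [Finset.smul_sum]
      refine Finset.sum_congr rfl fun α _ => ?_
      rw [Finset.sum_eq_single α]
      · by_cases h : i = l <;> simp [h]
      · intro β _ hne
        rw [if_neg (fun hc => hne hc.2.symm), zero_smul]
      · intro h; exact absurd (Finset.mem_univ α) h
  -- assemble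
  intro i j k l
  rw [hEF i j, hEF k l, brk_sub_smul_one, hFF i j k l, hEF i l, hEF k j]
  simp only [smul_sub (A := Module.End ℂ (Lam n p)), smul_smul]
  have hxy : (if j = k then (1:ℂ) else 0) * ((p:ℂ)/2 * (if i = l then 1 else 0))
      = (if i = l then (1:ℂ) else 0) * ((p:ℂ)/2 * (if k = j then 1 else 0)) := by
    by_cases h1 : j = k <;> by_cases h2 : i = l
    · simp [h1, h2]
    · simp [h1, h2]
    · have h1' : ¬ k = j := fun h => h1 h.symm
      simp [h1, h2, h1']
    · simp [h1, h2]
  rw [hxy]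
  abel
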